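/- Let σ be a balanced skew shape with height a and width b, i.e., a connected skew shape all of whose outward corners have displacement δ(c) = 0 (all outward corners occur on the main anti-diagonal from (a,0) to (0,b)). Then for every toggle-symmetric probability distribution μ on J(σ), the expected jaggedness of a μ-random subshape equals 2ab/(a+b). -/

import Mathlib

open Finset
open scoped Classical

noncomputable section

/-- A skew Young diagram `λ/ν` (in English notation) with height `a` and width `b`.
Rows are indexed `1,…,a` from top to bottom and columns `1,…,b` from left to right;
row `i` consists of the boxes in columns `ν i + 1, …, λ i` (each row is nonempty).
Box `[i,j]` has its southeast corner at the lattice point `(i,j)`, the point `(0,0)`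
being the northwest corner of the bounding `a × b` rectangle. -/
structure SkewShape where
  a : ℕ
  b : ℕ
  ha : 1 ≤ a
  hb : 1 ≤ b
  lam : ℕ → ℕ
  nu : ℕ → ℕ
  lam_anti : ∀ i j : ℕ, 1 ≤ i → i ≤ j → j ≤ a → lam j ≤ lam i
  nu_anti : ∀ i j : ℕ, 1 ≤ i → i ≤ j → j ≤ a → nu j ≤ nu i
  nu_lt_lam : ∀ i : ℕ, 1 ≤ i → i ≤ a → nu i < lam i
  lam_le_b : ∀ i : ℕ, 1 ≤ i → i ≤ a → lam i ≤ b
  lam_one : lam 1 = b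
  nu_a : nu a = 0

namespace SkewShape

variable (σ : SkewShape)

/-- The boxes of `σ` : pairs `[i,j]` with `1 ≤ i ≤ a` and `ν i < j ≤ λ i`.
The poset `P_σ` is the set of boxes ordered componentwise:
`[i,j] ≤ [k,l]` iff `i ≤ k` and `j ≤ l` (the product order on `ℕ × ℕ`). -/
def cells : Finset (ℕ × ℕ) :=
  (Finset.Icc 1 σ.a ×ˢ Finset.Icc 1 σ.b).filter
    (fun c => σ.nu c.1 < c.2 ∧ c.2 ≤ σ.lam c.1)

/-- The poset `P_σ` of boxes of `σ` is connected: it is nonempty, and any two boxes are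
joined by a walk along comparable pairs of boxes. -/
def Connected : Prop :=
  σ.cells.Nonempty ∧ ∀ p ∈ σ.cells, ∀ q ∈ σ.cells,
    Relation.ReflTransGen
      (fun x y : ℕ × ℕ => x ∈ σ.cells ∧ y ∈ σ.cells ∧ (x ≤ y ∨ y ≤ x)) p q

/-- `I` is an order ideal of `P_σ`, i.e. a subshape of `σ`. -/
def IsIdeal (I : Finset (ℕ × ℕ)) : Prop :=
  I ⊆ σ.cells ∧ ∀ p ∈ I, ∀ q ∈ σ.cells, q ≤ p → q ∈ I

/-- The set `J(σ)` of all order ideals of `P_σ` (equivalently, subshapes of `σ`). -/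
def idealsFinset : Finset (Finset (ℕ × ℕ)) :=
  σ.cells.powerset.filter fun I => σ.IsIdeal I

/-- Box `p` can be toggled in to the order ideal `I`. -/
def CanToggleIn (I : Finset (ℕ × ℕ)) (p : ℕ × ℕ) : Prop :=
  p ∈ σ.cells ∧ p ∉ I ∧ σ.IsIdeal (insert p I)

/-- Box `p` can be toggled out of the order ideal `I`. -/
def CanToggleOut (I : Finset (ℕ × ℕ)) (p : ℕ × ℕ) : Prop :=
  p ∈ I ∧ σ.IsIdeal (I.erase p)

/-- The jaggedness of `I`: the number of boxes that can be toggled in,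
plus the number of boxes that can be toggled out. -/
def jag (I : Finset (ℕ × ℕ)) : ℕ :=
  (σ.cells.filter fun p => σ.CanToggleIn I p).card +
  (σ.cells.filter fun p => σ.CanToggleOut I p).card

/-- The probability, under `μ`, that a random order ideal of `P_σ` satisfies `E`. -/
def pr (μ : Finset (ℕ × ℕ) → ℝ) (E : Finset (ℕ × ℕ) → Prop) : ℝ :=
  ∑ I ∈ σ.idealsFinset.filter E, μ I

/-- `μ` is a probability distribution on `J(σ)`. -/
def IsProbDist (μ : Finset (ℕ × ℕ) → ℝ) : Prop :=
  (∀ I, 0 ≤ μ I) ∧ (∑ I ∈ σ.idealsFinset, μ I = 1)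

/-- `μ` is toggle-symmetric: for every box `p` of `σ`, the probability that `p` can be
toggled in equals the probability that `p` can be toggled out. -/
def ToggleSymmetric (μ : Finset (ℕ × ℕ) → ℝ) : Prop :=
  ∀ p ∈ σ.cells,
    σ.pr μ (fun I => σ.CanToggleIn I p) = σ.pr μ (fun I => σ.CanToggleOut I p)

/-- The expectation of the statistic `f` with respect to `μ`. -/
def expect (μ : Finset (ℕ × ℕ) → ℝ) (f : Finset (ℕ × ℕ) → ℝ) : ℝ :=
  ∑ I ∈ σ.idealsFinset, μ I * f I

/-- `c` is a northwest outward corner of `σ`, occurring at the lattice point `c = (i,j)`: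
the northwest boundary of `σ` turns at `(i,j)` with its two steps
(the top edge of box `[i+1,j]` and the left edge of box `[i,j+1]`)
not bordering a common box of `σ`. -/
def IsNWCorner (c : ℕ × ℕ) : Prop :=
  (c.1 + 1, c.2) ∈ σ.cells ∧ (c.1, c.2 + 1) ∈ σ.cells ∧ (c.1, c.2) ∉ σ.cells

/-- `c` is a southeast outward corner of `σ`, occurring at the lattice point `c = (i,j)`:
the southeast boundary of `σ` turns at `(i,j)` with its two steps
(the right edge of box `[i+1,j]` and the bottom edge of box `[i,j+1]`)
not bordering a common box of `σ`. -/
def IsSECorner (c : ℕ × ℕ) : Prop :=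
  (c.1 + 1, c.2) ∈ σ.cells ∧ (c.1, c.2 + 1) ∈ σ.cells ∧ (c.1 + 1, c.2 + 1) ∉ σ.cells

/-- The set of northwest outward corners of `σ`. -/
def nwCorners : Finset (ℕ × ℕ) :=
  (Finset.range (σ.a + 1) ×ˢ Finset.range (σ.b + 1)).filter fun c => σ.IsNWCorner c

/-- The set of southeast outward corners of `σ`.
(Together, `nwCorners` and `seCorners` form the set `C(σ)` of outward corners.) -/
def seCorners : Finset (ℕ × ℕ) :=
  (Finset.range (σ.a + 1) ×ˢ Finset.range (σ.b + 1)).filter fun c => σ.IsSECorner c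

/-- The displacement `δ(c) = 1 − i/a − j/b` of a northwest corner occurring at `(i,j)`. -/
def nwDisp (c : ℕ × ℕ) : ℝ := 1 - (c.1 : ℝ) / (σ.a : ℝ) - (c.2 : ℝ) / (σ.b : ℝ)

/-- The displacement `δ(c) = −1 + i/a + j/b` of a southeast corner occurring at `(i,j)`. -/
def seDisp (c : ℕ × ℕ) : ℝ := -1 + (c.1 : ℝ) / (σ.a : ℝ) + (c.2 : ℝ) / (σ.b : ℝ)

/-- The lattice path of the subshape `I` includes both steps of the northwest corner at
`c = (i,j)`: neither box `[i+1,j]` nor box `[i,j+1]` belongs to `I`. -/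
def NWInPath (c : ℕ × ℕ) (I : Finset (ℕ × ℕ)) : Prop :=
  (c.1 + 1, c.2) ∉ I ∧ (c.1, c.2 + 1) ∉ I

/-- The lattice path of the subshape `I` includes both steps of the southeast corner at
`c = (i,j)`: both boxes `[i+1,j]` and `[i,j+1]` belong to `I`. -/
def SEInPath (c : ℕ × ℕ) (I : Finset (ℕ × ℕ)) : Prop :=
  (c.1 + 1, c.2) ∈ I ∧ (c.1, c.2 + 1) ∈ I

/-- The correction term `Σ_{c ∈ C(σ)} δ(c) · P_μ(c)`, where `P_μ(c)` is the
`μ`-probability that the lattice path of a random subshape includes both steps of `c`. -/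
def cornerCorrection (μ : Finset (ℕ × ℕ) → ℝ) : ℝ :=
  (∑ c ∈ σ.nwCorners, σ.nwDisp c * σ.pr μ (NWInPath c)) +
  (∑ c ∈ σ.seCorners, σ.seDisp c * σ.pr μ (SEInPath c))

end SkewShape

namespace SkewShape

variable (σ : SkewShape)

/-- `σ` is balanced: connected, with every outward corner of displacement `0`
(i.e. occurring on the main anti-diagonal from `(a,0)` to `(0,b)`). -/
def Balanced : Prop :=
  σ.Connected ∧ (∀ c ∈ σ.nwCorners, σ.nwDisp c = 0) ∧ ∀ c ∈ σ.seCorners, σ.seDisp c = 0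

/-- `σ` is abundant: connected, with every outward corner of displacement `≥ 0`. -/
def Abundant : Prop :=
  σ.Connected ∧ (∀ c ∈ σ.nwCorners, 0 ≤ σ.nwDisp c) ∧ ∀ c ∈ σ.seCorners, 0 ≤ σ.seDisp c

/-- `σ` is deficient: connected, with every outward corner of displacement `≤ 0`. -/
def Deficient : Prop :=
  σ.Connected ∧ (∀ c ∈ σ.nwCorners, σ.nwDisp c ≤ 0) ∧ ∀ c ∈ σ.seCorners, σ.seDisp c ≤ 0

end SkewShape

namespace SkewShape

variable (σ : SkewShape)

lemma mem_cells_iff (p : ℕ × ℕ) :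
    p ∈ σ.cells ↔ 1 ≤ p.1 ∧ p.1 ≤ σ.a ∧ σ.nu p.1 < p.2 ∧ p.2 ≤ σ.lam p.1 := by
  unfold cells
  simp only [Finset.mem_filter, Finset.mem_product, Finset.mem_Icc]
  constructor
  · rintro ⟨⟨⟨h1, h2⟩, _, _⟩, h5, h6⟩
    exact ⟨h1, h2, h5, h6⟩
  · rintro ⟨h1, h2, h5, h6⟩
    refine ⟨⟨⟨h1, h2⟩, ?_, ?_⟩, h5, h6⟩
    · omega
    · exact le_trans h6 (σ.lam_le_b p.1 h1 h2)

/-- Connectivity implies consecutive rows overlap. -/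
lemma overlap (hc : σ.Connected) (i : ℕ) (h1 : 1 ≤ i) (hlt : i < σ.a) :
    σ.nu i < σ.lam (i + 1) := by
  obtain ⟨-, hwalk⟩ := hc
  set R := fun x y : ℕ × ℕ => x ∈ σ.cells ∧ y ∈ σ.cells ∧ (x ≤ y ∨ y ≤ x) with hR
  have hp : ((i, σ.lam i) : ℕ × ℕ) ∈ σ.cells := by
    rw [σ.mem_cells_iff]
    exact ⟨h1, le_of_lt hlt, σ.nu_lt_lam i h1 (le_of_lt hlt), le_refl _⟩
  have hq : ((i+1, σ.lam (i+1)) : ℕ × ℕ) ∈ σ.cells := by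
    rw [σ.mem_cells_iff]
    exact ⟨by omega, hlt, σ.nu_lt_lam (i+1) (by omega) hlt, le_refl _⟩
  have key : ∀ p q : ℕ × ℕ, Relation.ReflTransGen R p q → p.1 ≤ i → i < q.1 →
      ∃ u v : ℕ × ℕ, R u v ∧ u.1 ≤ i ∧ i < v.1 := by
    intro p q hpq
    induction hpq using Relation.ReflTransGen.head_induction_on with
    | refl => intro h1 h2; omega
    | head hrel _ ih =>
      rename_i x y _
      intro hx hq
      by_cases hy : y.1 ≤ i
      · exact ih hy hq
      · exact ⟨x, y, hrel, hx, by omega⟩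
  obtain ⟨u, v, ⟨hu, hv, hcomp⟩, hui, hvi⟩ :=
    key _ _ (hwalk _ hp _ hq) (by simp) (by simp)
  rw [σ.mem_cells_iff] at hu hv
  have huv : u ≤ v := by
    rcases hcomp with h | h
    · exact h
    · exfalso; have := h.1; omega
  have h2 : σ.nu i ≤ σ.nu u.1 := σ.nu_anti u.1 i hu.1 hui (by omega)
  have h3 : σ.lam v.1 ≤ σ.lam (i+1) := σ.lam_anti (i+1) v.1 (by omega) hvi hv.2.1
  have h4 : u.2 ≤ v.2 := huv.2
  omega

end SkewShape
namespace SkewShape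

variable (σ : SkewShape)

/-- The harmonic mean `2ab/(a+b)`. -/
noncomputable def KK : ℝ := 2 * σ.a * σ.b / (σ.a + σ.b)

/-- The coefficient attached to box `p`. -/
noncomputable def cc (p : ℕ × ℕ) : ℝ :=
  σ.KK * ((p.1 : ℝ) / σ.a + (p.2 : ℝ) / σ.b - 1) - 1

lemma a_pos : (0 : ℝ) < σ.a := by exact_mod_cast σ.ha
lemma b_pos : (0 : ℝ) < σ.b := by exact_mod_cast σ.hb

lemma KK_harmonic : σ.KK / σ.a + σ.KK / σ.b = 2 := by
  have ha := σ.a_pos; have hb := σ.b_pos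
  unfold KK
  field_simp
  ring

lemma nw_corner_eq (hbal : σ.Balanced) (i j : ℕ) (h : σ.IsNWCorner (i, j)) :
    (i : ℝ) / σ.a + (j : ℝ) / σ.b = 1 := by
  have h1 := h.1; have h2 := h.2.1
  rw [σ.mem_cells_iff] at h1 h2
  simp only at h1 h2
  have hmem : ((i, j) : ℕ × ℕ) ∈ σ.nwCorners := by
    unfold nwCorners
    simp only [Finset.mem_filter, Finset.mem_product, Finset.mem_range]
    have hjb : j + 1 ≤ σ.b := le_trans h2.2.2.2 (σ.lam_le_b i h2.1 h2.2.1)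
    exact ⟨⟨by omega, by omega⟩, h⟩
  have hd := hbal.2.1 _ hmem
  unfold nwDisp at hd
  simp only at hd
  linarith

lemma se_corner_eq (hbal : σ.Balanced) (i j : ℕ) (h : σ.IsSECorner (i, j)) :
    (i : ℝ) / σ.a + (j : ℝ) / σ.b = 1 := by
  have h1 := h.1; have h2 := h.2.1
  rw [σ.mem_cells_iff] at h1 h2
  simp only at h1 h2
  have hmem : ((i, j) : ℕ × ℕ) ∈ σ.seCorners := by
    unfold seCorners
    simp only [Finset.mem_filter, Finset.mem_product, Finset.mem_range]
    have hjb : j ≤ σ.lam (i+1) := h1.2.2.2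
    have : σ.lam (i+1) ≤ σ.b := σ.lam_le_b (i+1) (by omega) h1.2.1
    exact ⟨⟨by omega, by omega⟩, h⟩
  have hd := hbal.2.2 _ hmem
  unfold seDisp at hd
  simp only at hd
  linarith

end SkewShape
namespace SkewShape

variable (σ : SkewShape)

lemma row_sum (hbal : σ.Balanced)
    (hov : ∀ i, 1 ≤ i → i < σ.a → σ.nu i < σ.lam (i + 1))
    (r : ℕ → ℕ)
    (hlow : ∀ i, 1 ≤ i → i ≤ σ.a → σ.nu i ≤ r i)
    (hup : ∀ i, 1 ≤ i → i ≤ σ.a → r i ≤ σ.lam i)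
    (hmono : ∀ i, 1 ≤ i → i < σ.a → r (i + 1) ≤ r i) :
    ∑ i ∈ Finset.Icc 1 σ.a,
      ((if r i < σ.lam i ∧ (i = 1 ∨ r i < r (i - 1)) then 1 - σ.cc (i, r i + 1) else 0)
        + (if σ.nu i < r i ∧ (i = σ.a ∨ r (i + 1) < r i) then 1 + σ.cc (i, r i) else 0))
      = σ.KK := by
  have ha := σ.a_pos
  have hb := σ.b_pos
  have haa := σ.ha
  have hbb := σ.hb
  have ha' : (σ.a : ℝ) ≠ 0 := ne_of_gt ha
  have hb' : (σ.b : ℝ) ≠ 0 := ne_of_gt hb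
  have hK := σ.KK_harmonic
  have key : ∀ k m : ℕ, 1 ≤ m → m + k = σ.a →
      ∑ i ∈ Finset.Icc m σ.a,
        ((if r i < σ.lam i ∧ (i = 1 ∨ r i < r (i - 1)) then 1 - σ.cc (i, r i + 1) else 0)
          + (if σ.nu i < r i ∧ (i = σ.a ∨ r (i + 1) < r i) then 1 + σ.cc (i, r i) else 0))
      = σ.KK * (r m : ℝ) / σ.b
        + (if r m < σ.lam m ∧ (m = 1 ∨ r m < r (m - 1)) then 1 - σ.cc (m, r m + 1) else 0) := by
    intro k
    induction k with
    | zero =>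
      intro m h1 hm
      have hma : m = σ.a := by omega
      subst hma
      rw [Finset.Icc_self, Finset.sum_singleton]
      have hnua := σ.nu_a
      have hout : (if σ.nu σ.a < r σ.a ∧ (σ.a = σ.a ∨ r (σ.a + 1) < r σ.a)
          then 1 + σ.cc (σ.a, r σ.a) else 0) = σ.KK * (r σ.a : ℝ) / σ.b := by
        by_cases hra : σ.nu σ.a < r σ.a
        · rw [if_pos ⟨hra, Or.inl rfl⟩]
          unfold cc
          rw [div_self ha']
          ring
        · rw [if_neg (by omega)]
          have hz : r σ.a = 0 := by omega
          rw [hz]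
          push_cast
          simp
      rw [hout]; ring
    | succ k ih =>
      intro m h1 hm
      have hmlt : m < σ.a := by omega
      have hsplit : Finset.Icc m σ.a = insert m (Finset.Icc (m + 1) σ.a) := by
        ext x; simp only [Finset.mem_Icc, Finset.mem_insert]; omega
      rw [hsplit, Finset.sum_insert (by simp)]
      rw [ih (m + 1) (by omega) (by omega)]
      have hyx : r (m + 1) ≤ r m := hmono m h1 hmlt
      have hmne : ¬ (m = σ.a) := by omega
      simp only [Nat.add_sub_cancel]
      rcases eq_or_lt_of_le hyx with heq | hlt
      · rw [heq]
        split_ifs <;> first | ring1 | (exfalso; omega)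
      · by_cases hx : σ.nu m < r m
        · by_cases hy : r (m + 1) < σ.lam (m + 1)
          · split_ifs <;> try (exfalso; omega)
            all_goals unfold cc
            all_goals push_cast
            all_goals linear_combination (-1 : ℝ) * hK
          · -- r (m+1) = lam (m+1) : SE corner at (m, r (m+1))
            have hyl : r (m + 1) = σ.lam (m + 1) := by
              have := hup (m + 1) (by omega) (by omega); omega
            have hcor : σ.IsSECorner (m, r (m + 1)) := by
              refine ⟨?_, ?_, ?_⟩
              · rw [σ.mem_cells_iff]
                simp only
                have := σ.nu_lt_lam (m + 1) (by omega) (by omega)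
                exact ⟨by omega, by omega, by omega, by omega⟩
              · rw [σ.mem_cells_iff]
                simp only
                have hov' := hov m h1 hmlt
                have := hup m h1 (by omega)
                exact ⟨by omega, by omega, by omega, by omega⟩
              · rw [σ.mem_cells_iff]
                simp only
                push_neg
                intro _ _ _
                omega
            have hc := σ.se_corner_eq hbal _ _ hcor
            split_ifs <;> try (exfalso; omega)
            all_goals unfold cc
            all_goals push_cast
            all_goals linear_combination σ.KK * hc
        · -- r m = nu m : NW corner at (m, r m)
          have hxn : r m = σ.nu m := by have := hlow m h1 (by omega); omega
          have hy : r (m + 1) < σ.lam (m + 1) := by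
            have := hov m h1 hmlt; omega
          have hcor : σ.IsNWCorner (m, r m) := by
            refine ⟨?_, ?_, ?_⟩
            · rw [σ.mem_cells_iff]
              simp only
              have h5 := hlow (m + 1) (by omega) (by omega)
              have h6 := hov m h1 hmlt
              exact ⟨by omega, by omega, by omega, by omega⟩
            · rw [σ.mem_cells_iff]
              simp only
              have := σ.nu_lt_lam m h1 (by omega)
              exact ⟨by omega, by omega, by omega, by omega⟩
            · rw [σ.mem_cells_iff]
              simp only
              push_neg
              intro _ _ _
              omega
          have hc := σ.nw_corner_eq hbal _ _ hcor
          split_ifs <;> try (exfalso; omega)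
          all_goals unfold cc
          all_goals push_cast
          all_goals linear_combination (-1 : ℝ) * hK - σ.KK * hc
  have hfin := key (σ.a - 1) 1 (le_refl 1) (by omega)
  rw [hfin, σ.lam_one]
  have hr1b : r 1 ≤ σ.b := by
    have := hup 1 (le_refl 1) σ.ha; rw [σ.lam_one] at this; exact this
  by_cases h1b : r 1 < σ.b
  · rw [if_pos ⟨h1b, Or.inl rfl⟩]
    unfold cc
    push_cast
    linear_combination (-1 : ℝ) * hK
  · have hr1 : r 1 = σ.b := by omega
    rw [if_neg (by omega), hr1]
    field_simp
    simp

end SkewShape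
namespace SkewShape

variable (σ : SkewShape)

/-- The column of the last box of row `i` in the subshape `I` (or `ν i` if row `i` of `I`
is empty). -/
def rowTop (I : Finset (ℕ × ℕ)) (i : ℕ) : ℕ :=
  max (σ.nu i) ((I.filter (fun p => p.1 = i)).sup Prod.snd)

lemma nu_le_rowTop (I : Finset (ℕ × ℕ)) (i : ℕ) : σ.nu i ≤ σ.rowTop I i :=
  le_max_left _ _

lemma mem_iff_rowTop {I : Finset (ℕ × ℕ)} (hI : σ.IsIdeal I) (i j : ℕ) :
    (i, j) ∈ I ↔ 1 ≤ i ∧ i ≤ σ.a ∧ σ.nu i < j ∧ j ≤ σ.rowTop I i := by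
  constructor
  · intro h
    have hc := hI.1 h
    rw [σ.mem_cells_iff] at hc
    refine ⟨hc.1, hc.2.1, hc.2.2.1, ?_⟩
    refine le_trans ?_ (le_max_right (σ.nu i) _)
    have : (i, j) ∈ I.filter (fun p => p.1 = i) := by
      rw [Finset.mem_filter]; exact ⟨h, rfl⟩
    exact Finset.le_sup (f := Prod.snd) this
  · rintro ⟨h1, h2, h3, h4⟩
    by_cases hne : (I.filter (fun p => p.1 = i)).Nonempty
    · obtain ⟨q, hq, hqs⟩ := Finset.exists_mem_eq_sup _ hne Prod.snd
      rw [Finset.mem_filter] at hq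
      obtain ⟨hqI, hqi⟩ := hq
      have hqc := hI.1 hqI
      rw [σ.mem_cells_iff] at hqc
      rw [hqi] at hqc
      have hjq : j ≤ q.2 := by
        rcases max_cases (σ.nu i) ((I.filter (fun p => p.1 = i)).sup Prod.snd) with
          ⟨he, hle⟩ | ⟨he, hle⟩
        · unfold rowTop at h4; omega
        · unfold rowTop at h4; rw [he, hqs] at h4; exact h4
      refine hI.2 q hqI (i, j) ?_ ?_
      · rw [σ.mem_cells_iff]
        refine ⟨h1, h2, h3, ?_⟩
        show j ≤ σ.lam i
        omega
      · rw [Prod.mk_le_mk]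
        refine ⟨by omega, by omega⟩
    · exfalso
      rw [Finset.not_nonempty_iff_eq_empty] at hne
      have : σ.rowTop I i = σ.nu i := by
        unfold rowTop; rw [hne]; simp
      omega

lemma rowTop_le_lam {I : Finset (ℕ × ℕ)} (hI : σ.IsIdeal I) (i : ℕ)
    (h1 : 1 ≤ i) (h2 : i ≤ σ.a) : σ.rowTop I i ≤ σ.lam i := by
  unfold rowTop
  refine max_le (le_of_lt (σ.nu_lt_lam i h1 h2)) ?_
  by_cases hne : (I.filter (fun p => p.1 = i)).Nonempty
  · obtain ⟨q, hq, hqs⟩ := Finset.exists_mem_eq_sup _ hne Prod.snd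
    rw [Finset.mem_filter] at hq
    have hqc := hI.1 hq.1
    rw [σ.mem_cells_iff] at hqc
    rw [hq.2] at hqc
    rw [hqs]
    exact hqc.2.2.2
  · rw [Finset.not_nonempty_iff_eq_empty] at hne
    rw [hne, Finset.sup_empty]
    exact Nat.zero_le _

lemma rowTop_anti_succ {I : Finset (ℕ × ℕ)} (hI : σ.IsIdeal I) (i : ℕ)
    (h1 : 1 ≤ i) (h2 : i < σ.a) : σ.rowTop I (i + 1) ≤ σ.rowTop I i := by
  set t := σ.rowTop I (i + 1) with ht
  by_cases htn : t ≤ σ.nu i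
  · exact le_trans htn (σ.nu_le_rowTop I i)
  · push_neg at htn
    have hmem : ((i + 1, t) : ℕ × ℕ) ∈ I := by
      rw [σ.mem_iff_rowTop hI]
      have hnu : σ.nu (i + 1) ≤ σ.nu i := σ.nu_anti i (i + 1) h1 (by omega) h2
      exact ⟨by omega, by omega, by omega, le_refl _⟩
    have hup : t ≤ σ.lam (i + 1) := σ.rowTop_le_lam hI (i + 1) (by omega) h2
    have hmem2 : ((i, t) : ℕ × ℕ) ∈ I := by
      refine hI.2 _ hmem (i, t) ?_ ?_
      · rw [σ.mem_cells_iff]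
        have hll : σ.lam (i + 1) ≤ σ.lam i := σ.lam_anti i (i + 1) h1 (by omega) h2
        refine ⟨h1, by omega, htn, ?_⟩
        show t ≤ σ.lam i
        omega
      · rw [Prod.mk_le_mk]
        exact ⟨by omega, le_refl _⟩
    rw [σ.mem_iff_rowTop hI] at hmem2
    exact hmem2.2.2.2

lemma rowTop_anti {I : Finset (ℕ × ℕ)} (hI : σ.IsIdeal I) (k i : ℕ)
    (h1 : 1 ≤ k) (h2 : k ≤ i) (h3 : i ≤ σ.a) : σ.rowTop I i ≤ σ.rowTop I k := by
  induction i with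
  | zero => omega
  | succ n ihn =>
    rcases Nat.lt_or_ge k (n + 1) with h | h
    · exact le_trans (σ.rowTop_anti_succ hI n (by omega) (by omega))
        (ihn (by omega) (by omega))
    · have : k = n + 1 := by omega
      rw [this]

end SkewShape
namespace SkewShape

variable (σ : SkewShape)

lemma canToggleIn_iff {I : Finset (ℕ × ℕ)} (hI : σ.IsIdeal I) (p : ℕ × ℕ) :
    σ.CanToggleIn I p ↔ 1 ≤ p.1 ∧ p.1 ≤ σ.a ∧ p.2 = σ.rowTop I p.1 + 1 ∧
      σ.rowTop I p.1 < σ.lam p.1 ∧ (p.1 = 1 ∨ σ.rowTop I p.1 < σ.rowTop I (p.1 - 1)) := by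
  obtain ⟨i, j⟩ := p
  simp only
  constructor
  · rintro ⟨hcell, hnI, hsub, hcl⟩
    rw [σ.mem_cells_iff] at hcell
    obtain ⟨h1, h2, h3, h4⟩ := hcell
    simp only at h1 h2 h3 h4
    have hrt : σ.rowTop I i < j := by
      by_contra hle
      push_neg at hle
      exact hnI ((σ.mem_iff_rowTop hI i j).mpr ⟨h1, h2, h3, hle⟩)
    have hnurt := σ.nu_le_rowTop I i
    have hj : j = σ.rowTop I i + 1 := by
      rcases Nat.lt_or_ge (σ.nu i) (j - 1) with hc | hc
      · have hwc : ((i, j - 1) : ℕ × ℕ) ∈ σ.cells := by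
          rw [σ.mem_cells_iff]
          exact ⟨h1, h2, hc, by show j - 1 ≤ σ.lam i; omega⟩
        have hwin : ((i, j - 1) : ℕ × ℕ) ∈ insert (i, j) I :=
          hcl (i, j) (Finset.mem_insert_self _ _) (i, j - 1) hwc
            (by rw [Prod.mk_le_mk]; exact ⟨le_refl _, by omega⟩)
        rw [Finset.mem_insert] at hwin
        rcases hwin with he | hmem
        · exfalso
          have := congrArg Prod.snd he
          simp only at this
          omega
        · rw [σ.mem_iff_rowTop hI] at hmem
          omega
      · omega
    refine ⟨h1, h2, hj, by omega, ?_⟩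
    rcases Nat.eq_or_lt_of_le h1 with he | hgt
    · exact Or.inl he.symm
    · right
      rcases Nat.lt_or_ge (σ.nu (i - 1)) j with hc | hc
      · have hwc : ((i - 1, j) : ℕ × ℕ) ∈ σ.cells := by
          rw [σ.mem_cells_iff]
          refine ⟨by omega, by omega, hc, ?_⟩
          show j ≤ σ.lam (i - 1)
          have := σ.lam_anti (i - 1) i (by omega) (by omega) h2
          omega
        have hwin : ((i - 1, j) : ℕ × ℕ) ∈ insert (i, j) I :=
          hcl (i, j) (Finset.mem_insert_self _ _) (i - 1, j) hwc
            (by rw [Prod.mk_le_mk]; exact ⟨by omega, le_refl _⟩)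
        rw [Finset.mem_insert] at hwin
        rcases hwin with he | hmem
        · exfalso
          have := congrArg Prod.fst he
          simp only at this
          omega
        · rw [σ.mem_iff_rowTop hI] at hmem
          omega
      · have := σ.nu_le_rowTop I (i - 1)
        omega
  · rintro ⟨h1, h2, hj, hlam, hor⟩
    have hnurt := σ.nu_le_rowTop I i
    have hcell : ((i, j) : ℕ × ℕ) ∈ σ.cells := by
      rw [σ.mem_cells_iff]
      refine ⟨h1, h2, ?_, ?_⟩
      · show σ.nu i < j
        omega
      · show j ≤ σ.lam i
        omega
    refine ⟨hcell, ?_, ?_, ?_⟩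
    · intro hmem
      rw [σ.mem_iff_rowTop hI] at hmem
      omega
    · intro q hq
      rw [Finset.mem_insert] at hq
      rcases hq with he | hmem
      · rw [he]; exact hcell
      · exact hI.1 hmem
    · intro q hq w hw hle
      rw [Finset.mem_insert] at hq
      rcases hq with he | hmem
      · subst he
        obtain ⟨w1, w2⟩ := w
        rw [Prod.mk_le_mk] at hle
        rw [σ.mem_cells_iff] at hw
        obtain ⟨hw1, hw2, hw3, hw4⟩ := hw
        simp only at hw1 hw2 hw3 hw4 hle
        rw [Finset.mem_insert]
        by_cases hwp : w1 = i ∧ w2 = j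
        · left; rw [hwp.1, hwp.2]
        · right
          rw [σ.mem_iff_rowTop hI]
          refine ⟨hw1, hw2, hw3, ?_⟩
          rcases Nat.eq_or_lt_of_le hle.1 with he1 | hlt1
          · have : ¬ (w2 = j) := by tauto
            have hrw : σ.rowTop I w1 = σ.rowTop I i := by rw [he1]
            omega
          · have hi1 : ¬ (i = 1) := by omega
            have hor' : σ.rowTop I i < σ.rowTop I (i - 1) := by tauto
            have hch : σ.rowTop I (i - 1) ≤ σ.rowTop I w1 :=
              σ.rowTop_anti hI w1 (i - 1) hw1 (by omega) (by omega)
            omega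
      · exact Finset.mem_insert_of_mem (hI.2 q hmem w hw hle)

lemma canToggleOut_iff {I : Finset (ℕ × ℕ)} (hI : σ.IsIdeal I) (p : ℕ × ℕ) :
    σ.CanToggleOut I p ↔ 1 ≤ p.1 ∧ p.1 ≤ σ.a ∧ p.2 = σ.rowTop I p.1 ∧
      σ.nu p.1 < σ.rowTop I p.1 ∧ (p.1 = σ.a ∨ σ.rowTop I (p.1 + 1) < σ.rowTop I p.1) := by
  obtain ⟨i, j⟩ := p
  simp only
  constructor
  · rintro ⟨hmem, hsub, hcl⟩
    have hpc : ((i, j) : ℕ × ℕ) ∈ σ.cells := hI.1 hmem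
    rw [σ.mem_iff_rowTop hI] at hmem
    obtain ⟨h1, h2, h3, h4⟩ := hmem
    have hj : j = σ.rowTop I i := by
      by_contra hne
      have hq : ((i, j + 1) : ℕ × ℕ) ∈ I := by
        rw [σ.mem_iff_rowTop hI]
        exact ⟨h1, h2, by omega, by omega⟩
      have hqe : ((i, j + 1) : ℕ × ℕ) ∈ I.erase (i, j) := by
        rw [Finset.mem_erase]
        refine ⟨?_, hq⟩
        intro he
        have := congrArg Prod.snd he
        simp only at this
        omega
      have := hcl _ hqe (i, j) hpc (by rw [Prod.mk_le_mk]; exact ⟨le_refl _, by omega⟩)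
      rw [Finset.mem_erase] at this
      exact this.1 rfl
    refine ⟨h1, h2, hj, by omega, ?_⟩
    rcases Nat.eq_or_lt_of_le h2 with he | hgt
    · exact Or.inl he
    · right
      by_contra hge
      push_neg at hge
      have hq : ((i + 1, j) : ℕ × ℕ) ∈ I := by
        rw [σ.mem_iff_rowTop hI]
        have := σ.nu_anti i (i + 1) h1 (by omega) hgt
        exact ⟨by omega, by omega, by omega, by omega⟩
      have hqe : ((i + 1, j) : ℕ × ℕ) ∈ I.erase (i, j) := by
        rw [Finset.mem_erase]
        refine ⟨?_, hq⟩
        intro he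
        have := congrArg Prod.fst he
        simp only at this
        omega
      have := hcl _ hqe (i, j) hpc (by rw [Prod.mk_le_mk]; exact ⟨by omega, le_refl _⟩)
      rw [Finset.mem_erase] at this
      exact this.1 rfl
  · rintro ⟨h1, h2, hj, hnu, hor⟩
    subst hj
    have hmem : ((i, σ.rowTop I i) : ℕ × ℕ) ∈ I := by
      rw [σ.mem_iff_rowTop hI]
      exact ⟨h1, h2, hnu, le_refl _⟩
    refine ⟨hmem, ?_, ?_⟩
    · intro q hq
      exact hI.1 (Finset.mem_of_mem_erase hq)
    · intro q hq w hw hle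
      rw [Finset.mem_erase] at hq
      obtain ⟨hqne, hqI⟩ := hq
      have hwI : w ∈ I := hI.2 q hqI w hw hle
      rw [Finset.mem_erase]
      refine ⟨?_, hwI⟩
      intro hwe
      subst hwe
      obtain ⟨k, l⟩ := q
      rw [Prod.mk_le_mk] at hle
      rw [σ.mem_iff_rowTop hI] at hqI
      obtain ⟨hk1, hk2, hk3, hk4⟩ := hqI
      rcases Nat.eq_or_lt_of_le hle.1 with he1 | hlt1
      · apply hqne
        subst he1
        have hll : l = σ.rowTop I i := le_antisymm hk4 hle.2
        rw [hll]
      · have hia : ¬ (i = σ.a) := by omega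
        have hor' : σ.rowTop I (i + 1) < σ.rowTop I i := by tauto
        have hch : σ.rowTop I k ≤ σ.rowTop I (i + 1) :=
          σ.rowTop_anti hI (i + 1) k (by omega) (by omega) hk2
        omega

end SkewShape
namespace SkewShape

variable (σ : SkewShape)

lemma jag_identity (hbal : σ.Balanced) {I : Finset (ℕ × ℕ)} (hI : σ.IsIdeal I) :
    (σ.jag I : ℝ) = σ.KK
      + (∑ p ∈ σ.cells.filter (fun p => σ.CanToggleIn I p), σ.cc p)
      - (∑ p ∈ σ.cells.filter (fun p => σ.CanToggleOut I p), σ.cc p) := by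
  set r := σ.rowTop I with hr
  have hov : ∀ i, 1 ≤ i → i < σ.a → σ.nu i < σ.lam (i + 1) :=
    fun i h1 h2 => σ.overlap hbal.1 i h1 h2
  have hlow : ∀ i, 1 ≤ i → i ≤ σ.a → σ.nu i ≤ r i := fun i _ _ => σ.nu_le_rowTop I i
  have hup : ∀ i, 1 ≤ i → i ≤ σ.a → r i ≤ σ.lam i := fun i h1 h2 => σ.rowTop_le_lam hI i h1 h2
  have hmono : ∀ i, 1 ≤ i → i < σ.a → r (i + 1) ≤ r i :=
    fun i h1 h2 => σ.rowTop_anti_succ hI i h1 h2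
  have hrow := σ.row_sum hbal hov r hlow hup hmono
  have hIn : σ.cells.filter (fun p => σ.CanToggleIn I p)
      = ((Finset.Icc 1 σ.a).filter
          (fun i => r i < σ.lam i ∧ (i = 1 ∨ r i < r (i - 1)))).image
          (fun i => (i, r i + 1)) := by
    ext p
    rw [Finset.mem_filter, Finset.mem_image]
    constructor
    · rintro ⟨hpc, hpt⟩
      rw [σ.canToggleIn_iff hI] at hpt
      obtain ⟨h1, h2, hj, hlam, hor⟩ := hpt
      refine ⟨p.1, ?_, ?_⟩
      · rw [Finset.mem_filter, Finset.mem_Icc]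
        exact ⟨⟨h1, h2⟩, hlam, hor⟩
      · exact Prod.ext rfl hj.symm
    · rintro ⟨i, hi, he⟩
      rw [Finset.mem_filter, Finset.mem_Icc] at hi
      have hpt : σ.CanToggleIn I p := by
        rw [σ.canToggleIn_iff hI, ← he]
        exact ⟨hi.1.1, hi.1.2, rfl, hi.2.1, hi.2.2⟩
      exact ⟨hpt.1, hpt⟩
  have hOut : σ.cells.filter (fun p => σ.CanToggleOut I p)
      = ((Finset.Icc 1 σ.a).filter
          (fun i => σ.nu i < r i ∧ (i = σ.a ∨ r (i + 1) < r i))).image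
          (fun i => (i, r i)) := by
    ext p
    rw [Finset.mem_filter, Finset.mem_image]
    constructor
    · rintro ⟨hpc, hpt⟩
      rw [σ.canToggleOut_iff hI] at hpt
      obtain ⟨h1, h2, hj, hnu, hor⟩ := hpt
      refine ⟨p.1, ?_, ?_⟩
      · rw [Finset.mem_filter, Finset.mem_Icc]
        exact ⟨⟨h1, h2⟩, hnu, hor⟩
      · exact Prod.ext rfl hj.symm
    · rintro ⟨i, hi, he⟩
      rw [Finset.mem_filter, Finset.mem_Icc] at hi
      have hpt : σ.CanToggleOut I p := by
        rw [σ.canToggleOut_iff hI, ← he]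
        exact ⟨hi.1.1, hi.1.2, rfl, hi.2.1, hi.2.2⟩
      have hpc : p ∈ σ.cells := hI.1 hpt.1
      exact ⟨hpc, hpt⟩
  have hinjIn : Function.Injective (fun i : ℕ => ((i, r i + 1) : ℕ × ℕ)) := by
    intro x y h
    exact congrArg Prod.fst h
  have hinjOut : Function.Injective (fun i : ℕ => ((i, r i) : ℕ × ℕ)) := by
    intro x y h
    exact congrArg Prod.fst h
  have hA : ∑ p ∈ σ.cells.filter (fun p => σ.CanToggleIn I p), σ.cc p
      = ∑ i ∈ Finset.Icc 1 σ.a,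
          (if r i < σ.lam i ∧ (i = 1 ∨ r i < r (i - 1)) then σ.cc (i, r i + 1) else 0) := by
    rw [hIn, Finset.sum_image (fun x _ y _ h => hinjIn h), Finset.sum_filter]
  have hB : ∑ p ∈ σ.cells.filter (fun p => σ.CanToggleOut I p), σ.cc p
      = ∑ i ∈ Finset.Icc 1 σ.a,
          (if σ.nu i < r i ∧ (i = σ.a ∨ r (i + 1) < r i) then σ.cc (i, r i) else 0) := by
    rw [hOut, Finset.sum_image (fun x _ y _ h => hinjOut h), Finset.sum_filter]
  have hjag : (σ.jag I : ℝ) = ∑ i ∈ Finset.Icc 1 σ.a,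
      ((if r i < σ.lam i ∧ (i = 1 ∨ r i < r (i - 1)) then (1 : ℝ) else 0)
        + (if σ.nu i < r i ∧ (i = σ.a ∨ r (i + 1) < r i) then (1 : ℝ) else 0)) := by
    unfold jag
    rw [hIn, hOut, Finset.card_image_of_injective _ hinjIn,
      Finset.card_image_of_injective _ hinjOut, Finset.card_filter, Finset.card_filter]
    push_cast
    rw [Finset.sum_add_distrib]
  rw [hjag, hA, hB, ← hrow, ← Finset.sum_add_distrib, ← Finset.sum_sub_distrib]
  apply Finset.sum_congr rfl
  intro i _
  split_ifs <;> ring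

end SkewShape

/-- Corollary 3.10: for a balanced skew shape `σ` with height `a` and
width `b`, the expected jaggedness of a subshape with respect to any toggle-symmetric
probability distribution on `J(σ)` is exactly the harmonic mean `2ab/(a+b)`. -/
theorem SkewShape.expected_jaggedness_balanced (σ : SkewShape) (hbal : σ.Balanced)
    (μ : Finset (ℕ × ℕ) → ℝ) (hμ : σ.IsProbDist μ) (hts : σ.ToggleSymmetric μ) :
    σ.expect μ (fun I => (σ.jag I : ℝ)) =
      2 * (σ.a : ℝ) * (σ.b : ℝ) / ((σ.a : ℝ) + (σ.b : ℝ)) := by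
  classical
  have hideal : ∀ I ∈ σ.idealsFinset, σ.IsIdeal I := by
    intro I hI
    unfold idealsFinset at hI
    exact (Finset.mem_filter.mp hI).2
  have hpr : ∀ E : Finset (ℕ × ℕ) → Prop,
      σ.pr μ E = ∑ I ∈ σ.idealsFinset, (if E I then μ I else 0) := by
    intro E
    unfold pr
    rw [Finset.sum_filter]
  have h1 : ∀ I ∈ σ.idealsFinset, μ I * (σ.jag I : ℝ)
      = μ I * σ.KK
        + (∑ p ∈ σ.cells, (if σ.CanToggleIn I p then μ I * σ.cc p else 0))
        - (∑ p ∈ σ.cells, (if σ.CanToggleOut I p then μ I * σ.cc p else 0)) := by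
    intro I hI
    rw [σ.jag_identity hbal (hideal I hI)]
    rw [Finset.sum_filter, Finset.sum_filter, mul_sub, mul_add, Finset.mul_sum,
      Finset.mul_sum]
    congr 1
    · congr 1
      apply Finset.sum_congr rfl
      intro p _
      split_ifs <;> ring
    · apply Finset.sum_congr rfl
      intro p _
      split_ifs <;> ring
  unfold expect
  rw [Finset.sum_congr rfl h1]
  rw [Finset.sum_sub_distrib, Finset.sum_add_distrib]
  rw [Finset.sum_comm (s := σ.idealsFinset) (t := σ.cells)]
  rw [Finset.sum_comm (s := σ.idealsFinset) (t := σ.cells)]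
  have hzero : ∀ p ∈ σ.cells,
      (∑ I ∈ σ.idealsFinset, (if σ.CanToggleIn I p then μ I * σ.cc p else 0))
        - (∑ I ∈ σ.idealsFinset, (if σ.CanToggleOut I p then μ I * σ.cc p else 0)) = 0 := by
    intro p hp
    have hts' := hts p hp
    rw [hpr, hpr] at hts'
    have e1 : (∑ I ∈ σ.idealsFinset, (if σ.CanToggleIn I p then μ I * σ.cc p else 0))
        = (∑ I ∈ σ.idealsFinset, (if σ.CanToggleIn I p then μ I else 0)) * σ.cc p := by
      rw [Finset.sum_mul]
      apply Finset.sum_congr rfl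
      intro I _
      split_ifs <;> ring
    have e2 : (∑ I ∈ σ.idealsFinset, (if σ.CanToggleOut I p then μ I * σ.cc p else 0))
        = (∑ I ∈ σ.idealsFinset, (if σ.CanToggleOut I p then μ I else 0)) * σ.cc p := by
      rw [Finset.sum_mul]
      apply Finset.sum_congr rfl
      intro I _
      split_ifs <;> ring
    rw [e1, e2, hts']
    ring
  have hsplit : (∑ p ∈ σ.cells, ∑ I ∈ σ.idealsFinset,
        (if σ.CanToggleIn I p then μ I * σ.cc p else 0))
      - (∑ p ∈ σ.cells, ∑ I ∈ σ.idealsFinset,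
        (if σ.CanToggleOut I p then μ I * σ.cc p else 0)) = 0 := by
    rw [← Finset.sum_sub_distrib]
    apply Finset.sum_eq_zero
    exact hzero
  have hK1 : ∑ I ∈ σ.idealsFinset, μ I * σ.KK = σ.KK := by
    rw [← Finset.sum_mul, hμ.2, one_mul]
  rw [add_sub_assoc, hsplit, add_zero, hK1]
  rfl
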